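/- Let 0 ≤ q < 1 and p ≥ max{q, (1+q)/3}. Then A_p(x,y) ≥ St_q(x,y) for all x,y > 0, where A_p is the power mean and St_q is the Stolarsky mean St_q(x,y) = ((x^q − y^q)/(q(x−y)))^{1/(q−1)} for q ≠ 0, x ≠ y, and St_0 = L the logarithmic mean. -/

import Mathlib

/-- The power mean of order `p > 0`. -/
noncomputable def powerMean (p x y : ℝ) : ℝ := ((x ^ p + y ^ p) / 2) ^ (1 / p)

/-- The Stolarsky mean `St_q`, with `St_0 = L` the logarithmic mean. -/
noncomputable def stolarskyMean (q x y : ℝ) : ℝ :=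
  if x = y then x
  else if q = 0 then (x - y) / (Real.log x - Real.log y)
  else ((x ^ q - y ^ q) / (q * (x - y))) ^ (1 / (q - 1))

open Real

/-- helper: if `f 0 = 0` and `f` has nonneg derivative on `[0,∞)`, then `f ≥ 0` there. -/
lemma nonneg_of_deriv_aux {f f' : ℝ → ℝ} (hf : ∀ u, HasDerivAt f (f' u) u)
    (h0 : f 0 = 0) (hf' : ∀ u, 0 ≤ u → 0 ≤ f' u) : ∀ u, 0 ≤ u → 0 ≤ f u := by
  have hm : MonotoneOn f (Set.Ici (0:ℝ)) := by
    apply monotoneOn_of_hasDerivWithinAt_nonneg (convex_Ici 0)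
      (fun x _ => (hf x).continuousAt.continuousWithinAt)
      (fun x hx => (hf x).hasDerivWithinAt)
    intro x hx
    exact hf' x (le_of_lt (by simpa using hx))
  intro u hu
  calc (0:ℝ) = f 0 := h0.symm
  _ ≤ f u := hm (by simp) (by simpa using hu) hu

lemma self_le_sinh {u : ℝ} (hu : 0 ≤ u) : u ≤ Real.sinh u := by
  rcases eq_or_lt_of_le hu with h | h
  · simp [← h]
  · exact (Real.self_lt_sinh_iff.2 h).le

lemma sinh_le_mul_cosh {u : ℝ} (hu : 0 ≤ u) : Real.sinh u ≤ u * Real.cosh u := by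
  have := nonneg_of_deriv_aux (f := fun u => u * Real.cosh u - Real.sinh u)
    (f' := fun u => u * Real.sinh u)
    (fun u => by
      have h1 := ((hasDerivAt_id u).mul (Real.hasDerivAt_cosh u)).sub (Real.hasDerivAt_sinh u)
      simp only [id_eq] at h1 ⊢; exact h1.congr_deriv (by ring))
    (by simp)
    (fun u hu => mul_nonneg hu (by rw [← Real.sinh_zero]; exact Real.sinh_le_sinh.2 hu))
    u hu
  linarith

lemma sinh_ge_cubic {u : ℝ} (hu : 0 ≤ u) : u + u^3/6 ≤ Real.sinh u := by
  have h1 : ∀ v, 0 ≤ v → 0 ≤ Real.cosh v - 1 - v^2/2 := by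
    apply nonneg_of_deriv_aux (f' := fun v => Real.sinh v - v)
    · intro v
      have := ((Real.hasDerivAt_cosh v).sub_const 1).sub
        (((hasDerivAt_pow 2 v)).div_const 2)
      exact this.congr_deriv (by ring)
    · simp
    · intro v hv; linarith [self_le_sinh hv]
  have h2 := nonneg_of_deriv_aux (f := fun u => Real.sinh u - u - u^3/6)
    (f' := fun v => Real.cosh v - 1 - v^2/2)
    (fun v => by
      have := ((Real.hasDerivAt_sinh v).sub (hasDerivAt_id v)).sub
        ((hasDerivAt_pow 3 v).div_const 6)
      exact this.congr_deriv (by ring))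
    (by simp)
    (fun v hv => h1 v hv) u hu
  linarith

lemma mul_cosh_le {u : ℝ} (hu : 0 ≤ u) : u * Real.cosh u ≤ (1 + u^2) * Real.sinh u := by
  have := nonneg_of_deriv_aux (f := fun u => (1 + u^2) * Real.sinh u - u * Real.cosh u)
    (f' := fun v => v * Real.sinh v + v^2 * Real.cosh v)
    (fun v => by
      have := (((hasDerivAt_pow 2 v).const_add 1).mul (Real.hasDerivAt_sinh v)).sub
        ((hasDerivAt_id v).mul (Real.hasDerivAt_cosh v))
      simp only [id_eq] at this ⊢; exact this.congr_deriv (by ring))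
    (by simp)
    (fun v hv => by
      have h1 : 0 ≤ Real.sinh v := by rw [← Real.sinh_zero]; exact Real.sinh_le_sinh.2 hv
      have h2 : (0:ℝ) ≤ Real.cosh v := (Real.cosh_pos v).le
      positivity)
    u hu
  linarith

lemma three_mul_cosh_le {u : ℝ} (hu : 0 ≤ u) :
    3 * u * Real.cosh u ≤ (3 + u^2) * Real.sinh u := by
  have := nonneg_of_deriv_aux (f := fun u => (3 + u^2) * Real.sinh u - 3 * u * Real.cosh u)
    (f' := fun v => v^2 * Real.cosh v - v * Real.sinh v)
    (fun v => by
      have := (((hasDerivAt_pow 2 v).const_add 3).mul (Real.hasDerivAt_sinh v)).sub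
        (((hasDerivAt_id v).const_mul 3).mul (Real.hasDerivAt_cosh v))
      simp only [id_eq] at this ⊢; exact this.congr_deriv (by ring))
    (by simp)
    (fun v hv => by
      have h2 := sinh_le_mul_cosh hv
      nlinarith [mul_le_mul_of_nonneg_left h2 hv])
    u hu
  linarith

lemma sinh_nonneg' {u : ℝ} (hu : 0 ≤ u) : 0 ≤ Real.sinh u := by
  rw [← Real.sinh_zero]; exact Real.sinh_le_sinh.2 hu

/-- Lazarević's inequality: `u^3 * cosh u ≤ sinh³ u`. -/
lemma lazarevic {u : ℝ} (hu : 0 ≤ u) : u^3 * Real.cosh u ≤ Real.sinh u ^ 3 := by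
  -- H4 ≥ 0
  have h4 : ∀ v, 0 ≤ v → 0 ≤ 81 * Real.sinh (3*v) - 99 * Real.sinh v - 144 * v * Real.cosh v
      - 48 * v^2 * Real.sinh v - 4 * v^3 * Real.cosh v := by
    intro v hv
    rw [Real.sinh_three_mul]
    have h1 := mul_cosh_le hv
    have h2 := sinh_ge_cubic hv
    have h3 := self_le_sinh hv
    have hS := sinh_nonneg' hv
    have hC := Real.cosh_pos v
    -- 324 sinh³ + 144 sinh ≥ 144 u cosh + 48 u² sinh + 4u³ cosh
    have hsq : v^2 + v^4/3 ≤ Real.sinh v ^ 2 := by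
      nlinarith [pow_le_pow_left₀ (by positivity : (0:ℝ) ≤ v + v^3/6) h2 2]
    have hcube : 324 * (v^2 + v^4/3) * Real.sinh v ≤ 324 * Real.sinh v ^2 * Real.sinh v := by
      have := mul_le_mul_of_nonneg_right hsq (mul_nonneg (by norm_num : (0:ℝ) ≤ 324) hS)
      nlinarith [this]
    nlinarith [mul_le_mul_of_nonneg_left h1 (by positivity : (0:ℝ) ≤ 4*v^2), hcube,
      mul_nonneg (mul_nonneg hv hv) hS, mul_nonneg (mul_nonneg (mul_nonneg hv hv) (mul_nonneg hv hv)) hS]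
  -- H3 ≥ 0
  have h3 : ∀ v, 0 ≤ v → 0 ≤ 27 * Real.cosh (3*v) - 27 * Real.cosh v - 72 * v * Real.sinh v
      - 36 * v^2 * Real.cosh v - 4 * v^3 * Real.sinh v := by
    apply nonneg_of_deriv_aux (f' := fun v => 81 * Real.sinh (3*v) - 99 * Real.sinh v
      - 144 * v * Real.cosh v - 48 * v^2 * Real.sinh v - 4 * v^3 * Real.cosh v)
    · intro v
      have d1 : HasDerivAt (fun x : ℝ => Real.cosh (3*x)) (3 * Real.sinh (3*v)) v := by
        have h := (Real.hasDerivAt_cosh (3*v)).comp v ((hasDerivAt_id v).const_mul 3)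
        refine h.congr_deriv ?_
        ring
      have := ((((d1.const_mul 27).sub ((Real.hasDerivAt_cosh v).const_mul 27)).sub
        (((hasDerivAt_id v).const_mul 72).mul (Real.hasDerivAt_sinh v))).sub
        (((hasDerivAt_pow 2 v).const_mul 36).mul (Real.hasDerivAt_cosh v))).sub
        (((hasDerivAt_pow 3 v).const_mul 4).mul (Real.hasDerivAt_sinh v))
      simp only [id_eq] at this ⊢
      refine this.congr_deriv ?_; push_cast; ring
    · simp
    · exact h4
  -- H2 ≥ 0
  have h2 : ∀ v, 0 ≤ v → 0 ≤ 9 * Real.sinh (3*v) - 3 * Real.sinh v - 24 * v * Real.cosh v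
      - 24 * v^2 * Real.sinh v - 4 * v^3 * Real.cosh v := by
    apply nonneg_of_deriv_aux (f' := fun v => 27 * Real.cosh (3*v) - 27 * Real.cosh v
      - 72 * v * Real.sinh v - 36 * v^2 * Real.cosh v - 4 * v^3 * Real.sinh v)
    · intro v
      have d1 : HasDerivAt (fun x : ℝ => Real.sinh (3*x)) (3 * Real.cosh (3*v)) v := by
        have h := (Real.hasDerivAt_sinh (3*v)).comp v ((hasDerivAt_id v).const_mul 3)
        refine h.congr_deriv ?_
        ring
      have := ((((d1.const_mul 9).sub ((Real.hasDerivAt_sinh v).const_mul 3)).sub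
        (((hasDerivAt_id v).const_mul 24).mul (Real.hasDerivAt_cosh v))).sub
        (((hasDerivAt_pow 2 v).const_mul 24).mul (Real.hasDerivAt_sinh v))).sub
        (((hasDerivAt_pow 3 v).const_mul 4).mul (Real.hasDerivAt_cosh v))
      simp only [id_eq] at this ⊢
      refine this.congr_deriv ?_; push_cast; ring
    · simp
    · exact h3
  -- H1 ≥ 0
  have h1 : ∀ v, 0 ≤ v → 0 ≤ 3 * Real.cosh (3*v) - 3 * Real.cosh v
      - 12 * v^2 * Real.cosh v - 4 * v^3 * Real.sinh v := by
    apply nonneg_of_deriv_aux (f' := fun v => 9 * Real.sinh (3*v) - 3 * Real.sinh v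
      - 24 * v * Real.cosh v - 24 * v^2 * Real.sinh v - 4 * v^3 * Real.cosh v)
    · intro v
      have d1 : HasDerivAt (fun x : ℝ => Real.cosh (3*x)) (3 * Real.sinh (3*v)) v := by
        have h := (Real.hasDerivAt_cosh (3*v)).comp v ((hasDerivAt_id v).const_mul 3)
        refine h.congr_deriv ?_
        ring
      have := (((d1.const_mul 3).sub ((Real.hasDerivAt_cosh v).const_mul 3)).sub
        (((hasDerivAt_pow 2 v).const_mul 12).mul (Real.hasDerivAt_cosh v))).sub
        (((hasDerivAt_pow 3 v).const_mul 4).mul (Real.hasDerivAt_sinh v))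
      refine this.congr_deriv ?_; push_cast; ring
    · simp
    · exact h2
  -- H ≥ 0
  have h0 : ∀ v, 0 ≤ v → 0 ≤ Real.sinh (3*v) - 3 * Real.sinh v - 4 * v^3 * Real.cosh v := by
    apply nonneg_of_deriv_aux (f' := fun v => 3 * Real.cosh (3*v) - 3 * Real.cosh v
      - 12 * v^2 * Real.cosh v - 4 * v^3 * Real.sinh v)
    · intro v
      have d1 : HasDerivAt (fun x : ℝ => Real.sinh (3*x)) (3 * Real.cosh (3*v)) v := by
        have h := (Real.hasDerivAt_sinh (3*v)).comp v ((hasDerivAt_id v).const_mul 3)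
        refine h.congr_deriv ?_
        ring
      have := ((d1.sub ((Real.hasDerivAt_sinh v).const_mul 3)).sub
        (((hasDerivAt_pow 3 v).const_mul 4).mul (Real.hasDerivAt_cosh v)))
      refine this.congr_deriv ?_; push_cast; ring
    · simp
    · exact h1
  have := h0 u hu
  rw [Real.sinh_three_mul] at this
  linarith

/-- `ψ u = log (sinh u / u)` (junk value `0` at `u = 0`). -/
noncomputable def psiFn (u : ℝ) : ℝ := Real.log (Real.sinh u) - Real.log u

/-- `χ u = coth u - 1/u`, the derivative of `ψ`. -/
noncomputable def chiFn (u : ℝ) : ℝ := Real.cosh u / Real.sinh u - 1 / u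

lemma chiFn_zero : chiFn 0 = 0 := by simp [chiFn]

lemma psiFn_zero : psiFn 0 = 0 := by simp [psiFn]

lemma hasDerivAt_psiFn {u : ℝ} (hu : 0 < u) : HasDerivAt psiFn (chiFn u) u := by
  have hs : 0 < Real.sinh u := Real.sinh_pos_iff.2 hu
  have h1 : HasDerivAt (fun x => Real.log (Real.sinh x)) (Real.cosh u / Real.sinh u) u := by
    have h := (Real.hasDerivAt_log hs.ne').comp u (Real.hasDerivAt_sinh u)
    refine h.congr_deriv ?_
    rw [div_eq_inv_mul]
  exact (h1.sub (Real.hasDerivAt_log hu.ne')).congr_deriv (by simp [chiFn])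

lemma hasDerivAt_chiFn {u : ℝ} (hu : 0 < u) :
    HasDerivAt chiFn (1/u^2 - 1/(Real.sinh u)^2) u := by
  have hs : 0 < Real.sinh u := Real.sinh_pos_iff.2 hu
  have h1 : HasDerivAt (fun x => Real.cosh x / Real.sinh x)
      ((Real.sinh u * Real.sinh u - Real.cosh u * Real.cosh u) / (Real.sinh u)^2) u :=
    (Real.hasDerivAt_cosh u).div (Real.hasDerivAt_sinh u) hs.ne'
  have h2 : HasDerivAt (fun x : ℝ => 1 / x) (-(1/u^2)) u := by
    simpa using (hasDerivAt_inv hu.ne')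
  have := h1.sub h2
  refine this.congr_deriv ?_
  have hm : Real.sinh u * Real.sinh u - Real.cosh u * Real.cosh u = -1 := by
    nlinarith [Real.cosh_sq u]
  rw [hm]
  field_simp
  ring

lemma hasDerivAt_chiFn' {u : ℝ} (hu : 0 < u) :
    HasDerivAt (fun u => 1/u^2 - 1/(Real.sinh u)^2)
      (-2/u^3 + 2 * Real.cosh u / (Real.sinh u)^3) u := by
  have hs : 0 < Real.sinh u := Real.sinh_pos_iff.2 hu
  have h1 : HasDerivAt (fun x : ℝ => 1 / x^2) (-2/u^3) u := by
    have := ((hasDerivAt_pow 2 u)).inv (by positivity)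
    simp only [one_div]
    refine this.congr_deriv ?_
    field_simp; ring
  have h2 : HasDerivAt (fun x : ℝ => 1 / (Real.sinh x)^2)
      (-(2 * Real.cosh u / (Real.sinh u)^3)) u := by
    have hp : HasDerivAt (fun x : ℝ => (Real.sinh x)^2) (2 * Real.sinh u * Real.cosh u) u := by
      have := (hasDerivAt_pow 2 (Real.sinh u)).comp u (Real.hasDerivAt_sinh u)
      exact this.congr_deriv (by norm_num)
    have := hp.inv (by positivity)
    simp only [one_div]
    refine this.congr_deriv ?_
    field_simp
  exact (h1.sub h2).congr_deriv (by ring)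

lemma chiFn_nonneg {u : ℝ} (hu : 0 ≤ u) : 0 ≤ chiFn u := by
  rcases eq_or_lt_of_le hu with h | h
  · simp [← h, chiFn]
  · have hs : 0 < Real.sinh u := Real.sinh_pos_iff.2 h
    rw [chiFn, sub_nonneg, div_le_div_iff₀ h hs]
    simpa [mul_comm] using sinh_le_mul_cosh hu

lemma chiFn_le {u : ℝ} (hu : 0 < u) : chiFn u ≤ u / 3 := by
  have hs : 0 < Real.sinh u := Real.sinh_pos_iff.2 hu
  rw [chiFn]
  rw [div_sub_div _ _ hs.ne' hu.ne', div_le_div_iff₀ (by positivity) (by norm_num : (0:ℝ) < 3)]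
  have := three_mul_cosh_le hu.le
  nlinarith [this, hs, hu]

lemma continuousOn_chiFn : ContinuousOn chiFn (Set.Ici 0) := by
  intro x hx
  rcases eq_or_lt_of_le (show (0:ℝ) ≤ x from hx) with h | h
  · -- continuity at 0 via squeeze
    rw [ContinuousWithinAt, ← h, chiFn_zero]
    apply squeeze_zero' (g := fun u => u / 3)
    · filter_upwards [self_mem_nhdsWithin] with u hu using chiFn_nonneg hu
    · filter_upwards [self_mem_nhdsWithin] with u (hu : (0:ℝ) ≤ u)
      rcases eq_or_lt_of_le hu with h' | h'
      · simp [← h', chiFn_zero]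
      · exact chiFn_le h'
    · have h3 : Filter.Tendsto (fun u : ℝ => u / 3) (nhds (0:ℝ)) (nhds ((0:ℝ)/3)) :=
        (continuous_id.div_const 3).tendsto 0
      simp only [zero_div] at h3
      exact h3.mono_left nhdsWithin_le_nhds
  · exact ((hasDerivAt_chiFn h).continuousAt).continuousWithinAt

lemma monotoneOn_chiFn : MonotoneOn chiFn (Set.Ici 0) := by
  apply monotoneOn_of_hasDerivWithinAt_nonneg (convex_Ici 0) continuousOn_chiFn
    (f' := fun u => 1/u^2 - 1/(Real.sinh u)^2)
  · intro x hx
    rw [interior_Ici] at hx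
    exact (hasDerivAt_chiFn hx).hasDerivWithinAt
  · intro x hx
    rw [interior_Ici] at hx
    have hx' : (0:ℝ) < x := hx
    have hs := self_le_sinh hx.le
    have hs0 : 0 < Real.sinh x := Real.sinh_pos_iff.2 hx
    rw [sub_nonneg]
    apply one_div_le_one_div_of_le (by positivity)

    exact pow_le_pow_left₀ hx.le hs 2

lemma concaveOn_chiFn : ConcaveOn ℝ (Set.Ici 0) chiFn := by
  apply concaveOn_of_hasDerivWithinAt2_nonpos (convex_Ici 0) continuousOn_chiFn
    (f' := fun u => 1/u^2 - 1/(Real.sinh u)^2)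
    (f'' := fun u => -2/u^3 + 2 * Real.cosh u / (Real.sinh u)^3)
  · intro x hx
    rw [interior_Ici] at hx
    exact (hasDerivAt_chiFn hx).hasDerivWithinAt
  · intro x hx
    rw [interior_Ici] at hx
    exact (hasDerivAt_chiFn' hx).hasDerivWithinAt
  · intro x hx
    rw [interior_Ici] at hx
    have hs0 : 0 < Real.sinh x := Real.sinh_pos_iff.2 hx
    have hx' : (0:ℝ) < x := hx
    have hl := lazarevic hx.le
    have hC := Real.cosh_pos x
    have : 2 * Real.cosh x / Real.sinh x ^3 ≤ 2 / x^3 := by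
      rw [div_le_div_iff₀ (by positivity) (by positivity)]
      nlinarith [hl]
    have e : (-2:ℝ)/x^3 = -(2/x^3) := by ring
    rw [e]
    linarith [this]

lemma psiFn_neg (u : ℝ) : psiFn (-u) = psiFn u := by
  rw [psiFn, psiFn, Real.sinh_neg, Real.log_neg_eq_log, Real.log_neg_eq_log]

lemma psiFn_nonneg {u : ℝ} (hu : 0 ≤ u) : 0 ≤ psiFn u := by
  rcases eq_or_lt_of_le hu with h | h
  · simp [← h, psiFn]
  · rw [psiFn, sub_nonneg]
    exact Real.log_le_log h (self_le_sinh hu)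

lemma psiFn_le {u : ℝ} (hu : 0 < u) : psiFn u ≤ Real.cosh u - 1 := by
  have hs : 0 < Real.sinh u := Real.sinh_pos_iff.2 hu
  have h1 : psiFn u = Real.log (Real.sinh u / u) := (Real.log_div hs.ne' hu.ne').symm
  rw [h1]
  have h2 : Real.sinh u / u ≤ Real.cosh u := by
    rw [div_le_iff₀ hu]
    simpa [mul_comm] using sinh_le_mul_cosh hu.le
  calc Real.log (Real.sinh u / u) ≤ Real.sinh u / u - 1 :=
        Real.log_le_sub_one_of_pos (by positivity)
  _ ≤ Real.cosh u - 1 := by linarith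

lemma hasDerivAt_psiFn_zero : HasDerivAt psiFn 0 0 := by
  rw [hasDerivAt_iff_tendsto_slope]
  have hcosh : Filter.Tendsto (slope Real.cosh 0) (nhdsWithin 0 {(0:ℝ)}ᶜ) (nhds 0) := by
    have := hasDerivAt_iff_tendsto_slope.mp (Real.hasDerivAt_cosh 0)
    simpa using this
  have habs : Filter.Tendsto (fun u => |slope Real.cosh 0 u|) (nhdsWithin 0 {(0:ℝ)}ᶜ) (nhds 0) := by
    simpa using hcosh.abs
  apply squeeze_zero_norm' _ habs
  filter_upwards [self_mem_nhdsWithin] with u (hu : u ≠ 0)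
  have hpos : 0 < |u| := abs_pos.2 hu
  rw [slope_def_field, slope_def_field, Real.norm_eq_abs]
  simp only [psiFn_zero, Real.cosh_zero, sub_zero]
  rw [abs_div, abs_div]
  have h1 : |psiFn u| = psiFn |u| := by
    rcases abs_cases u with ⟨h, _⟩ | ⟨h, _⟩
    · rw [h]; exact abs_of_nonneg (psiFn_nonneg (h ▸ abs_nonneg u))
    · calc |psiFn u| = |psiFn (-u)| := by rw [psiFn_neg]
      _ = psiFn (-u) := abs_of_nonneg (psiFn_nonneg (by linarith))
      _ = psiFn |u| := by rw [h]
  have h2 : |Real.cosh u - 1| = Real.cosh |u| - 1 := by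
    rw [abs_of_nonneg (by linarith [Real.one_le_cosh u]), Real.cosh_abs]
  rw [h1, h2]
  gcongr
  exact psiFn_le hpos

lemma hasDerivAt_psiFn' {u : ℝ} (hu : 0 ≤ u) : HasDerivAt psiFn (chiFn u) u := by
  rcases eq_or_lt_of_le hu with h | h
  · rw [← h, chiFn_zero]; exact hasDerivAt_psiFn_zero
  · exact hasDerivAt_psiFn h

/-- The difference quotient of `ψ` as an integral of `χ`. -/
noncomputable def Jint (r s : ℝ) : ℝ := ∫ θ in (0:ℝ)..1, chiFn (r + θ*(s-r))

lemma integrable_aux {r s : ℝ} (hr : 0 ≤ r) (hs : 0 ≤ s) :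
    IntervalIntegrable (fun θ => chiFn (r + θ*(s-r))) MeasureTheory.volume 0 1 := by
  apply ContinuousOn.intervalIntegrable
  apply continuousOn_chiFn.comp (Continuous.continuousOn (by continuity))
  intro θ hθ
  rw [Set.uIcc_of_le (by norm_num : (0:ℝ) ≤ 1)] at hθ
  obtain ⟨h0, h1⟩ := hθ
  simp only [Set.mem_Ici]
  nlinarith [mul_nonneg h0 hs, mul_nonneg (sub_nonneg.2 h1) hr]

lemma Jint_rep {r s : ℝ} (hr : 0 ≤ r) (hrs : r ≤ s) :
    psiFn s - psiFn r = (s - r) * Jint r s := by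
  have key := intervalIntegral.integral_eq_sub_of_hasDerivAt
    (f := fun θ : ℝ => psiFn (r + θ*(s-r))) (f' := fun θ => (s-r) * chiFn (r + θ*(s-r)))
    (a := 0) (b := 1) ?_ ?_
  · rw [Jint, ← intervalIntegral.integral_const_mul, key]
    norm_num
  · intro θ hθ
    rw [Set.uIcc_of_le (by norm_num : (0:ℝ) ≤ 1)] at hθ
    obtain ⟨h0, h1⟩ := hθ
    have hs : (0:ℝ) ≤ s := le_trans hr hrs
    have hin : 0 ≤ r + θ*(s-r) := by
      nlinarith [mul_nonneg h0 hs, mul_nonneg (sub_nonneg.2 h1) hr]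
    have hd : HasDerivAt (fun θ : ℝ => r + θ*(s-r)) (s-r) θ := by
      simpa using ((hasDerivAt_id θ).mul_const (s-r)).const_add r
    have := (hasDerivAt_psiFn' hin).comp θ hd
    exact this.congr_deriv (mul_comm _ _)
  · exact (integrable_aux hr (le_trans hr hrs)).const_mul _

lemma Jint_mono_right {r s s' : ℝ} (hr : 0 ≤ r) (hrs : r ≤ s) (hss : s ≤ s') :
    Jint r s ≤ Jint r s' := by
  apply intervalIntegral.integral_mono_on (by norm_num)
    (integrable_aux hr (le_trans hr hrs))
    (integrable_aux hr (le_trans (le_trans hr hrs) hss))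
  intro θ hθ
  obtain ⟨h0, h1⟩ := hθ
  apply monotoneOn_chiFn
  · simp only [Set.mem_Ici]
    nlinarith [mul_nonneg h0 (le_trans hr hrs), mul_nonneg (sub_nonneg.2 h1) hr]
  · simp only [Set.mem_Ici]
    nlinarith [mul_nonneg h0 (le_trans (le_trans hr hrs) hss), mul_nonneg (sub_nonneg.2 h1) hr]
  · nlinarith [mul_nonneg h0 (sub_nonneg.2 hss)]

/-- Concavity pairing: moving symmetric points towards the center increases the sum. -/
lemma chiFn_pair {m e e' : ℝ} (h1 : |e'| ≤ |e|) (h2 : |e| ≤ m) :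
    chiFn (m + e) + chiFn (m - e) ≤ chiFn (m + e') + chiFn (m - e') := by
  -- wlog both nonneg
  have key : ∀ f g : ℝ, 0 ≤ g → g ≤ f → f ≤ m →
      chiFn (m + f) + chiFn (m - f) ≤ chiFn (m + g) + chiFn (m - g) := by
    intro f g hg hgf hfm
    rcases eq_or_lt_of_le (le_trans hg hgf) with h | hf
    · have : g = 0 := le_antisymm (h ▸ hgf) hg
      rw [← h, this]
    · have hm : 0 < m := lt_of_lt_of_le hf hfm
      have hmem1 : m + f ∈ Set.Ici (0:ℝ) := by simp only [Set.mem_Ici]; linarith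
      have hmem2 : m - f ∈ Set.Ici (0:ℝ) := by simp only [Set.mem_Ici]; linarith
      have hla : (0:ℝ) ≤ (f+g)/(2*f) := by positivity
      have hlb : (0:ℝ) ≤ (f-g)/(2*f) := by
        apply div_nonneg (by linarith) (by linarith)
      have hsum : (f+g)/(2*f) + (f-g)/(2*f) = 1 := by field_simp; ring
      have c1 := concaveOn_chiFn.2 hmem1 hmem2 hla hlb hsum
      have c2 := concaveOn_chiFn.2 hmem1 hmem2 hlb hla (by linarith [hsum])
      have e1 : (f+g)/(2*f) * (m+f) + (f-g)/(2*f) * (m-f) = m + g := by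
        field_simp; ring
      have e2 : (f-g)/(2*f) * (m+f) + (f+g)/(2*f) * (m-f) = m - g := by
        field_simp; ring
      simp only [smul_eq_mul] at c1 c2
      rw [e1] at c1
      rw [e2] at c2
      have hlin : ((f+g)/(2*f) + (f-g)/(2*f)) * (chiFn (m+f) + chiFn (m-f))
          = chiFn (m+f) + chiFn (m-f) := by rw [hsum]; ring
      nlinarith [c1, c2, hlin]
  have hge : 0 ≤ |e| := abs_nonneg e
  have base := key |e| |e'| (abs_nonneg e') h1 h2
  have re : chiFn (m + |e|) + chiFn (m - |e|) = chiFn (m + e) + chiFn (m - e) := by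
    rcases abs_cases e with ⟨h, _⟩ | ⟨h, _⟩
    · rw [h]
    · rw [h]; ring_nf
  have re' : chiFn (m + |e'|) + chiFn (m - |e'|) = chiFn (m + e') + chiFn (m - e') := by
    rcases abs_cases e' with ⟨h, _⟩ | ⟨h, _⟩
    · rw [h]
    · rw [h]; ring_nf
  rw [re, re'] at base
  exact base

lemma Jint_flip {r s : ℝ} : Jint r s = Jint s r := by
  have base := intervalIntegral.integral_comp_sub_left (a := (0:ℝ)) (b := 1)
    (fun θ => chiFn (r + θ*(s-r))) 1
  have e1 : ∫ θ in (0:ℝ)..1, chiFn (s + θ*(r-s))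
      = ∫ θ in (0:ℝ)..1, (fun θ => chiFn (r + θ*(s-r))) (1-θ) := by
    apply intervalIntegral.integral_congr
    intro θ _
    simp only
    exact congrArg chiFn (by ring)
  rw [Jint, Jint, e1, base]
  norm_num

lemma Jint_shrink {r s r' s' : ℝ} (hr : 0 ≤ r) (h1 : r ≤ r') (h2 : r' ≤ s') (h3 : s' ≤ s)
    (hsum : r + s = r' + s') : Jint r s ≤ Jint r' s' := by
  have hs : (0:ℝ) ≤ s := le_trans hr (le_trans h1 (le_trans h2 h3))
  have hr' : (0:ℝ) ≤ r' := le_trans hr h1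
  have hs' : (0:ℝ) ≤ s' := le_trans hr' h2
  have hrs : r ≤ s := le_trans h1 (le_trans h2 h3)
  have i1 := integrable_aux hr hs
  have i2 := integrable_aux hs hr
  have i3 := integrable_aux hr' hs'
  have i4 := integrable_aux hs' hr'
  have key : (∫ θ in (0:ℝ)..1, (chiFn (r + θ*(s-r)) + chiFn (s + θ*(r-s))))
      ≤ ∫ θ in (0:ℝ)..1, (chiFn (r' + θ*(s'-r')) + chiFn (s' + θ*(r'-s'))) := by
    apply intervalIntegral.integral_mono_on (by norm_num) (i1.add i2) (i3.add i4)
    intro θ hθ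
    obtain ⟨h0, hθ1⟩ := hθ
    set m := (r+s)/2 with hm
    have a1 : r + θ*(s-r) = m + (θ - 1/2)*(s-r) := by rw [hm]; ring
    have a2 : s + θ*(r-s) = m - (θ - 1/2)*(s-r) := by rw [hm]; ring
    have a3 : r' + θ*(s'-r') = m + (θ - 1/2)*(s'-r') := by rw [hm]; field_simp; linarith [hsum]
    have a4 : s' + θ*(r'-s') = m - (θ - 1/2)*(s'-r') := by rw [hm]; field_simp; linarith [hsum]
    rw [a1, a2, a3, a4]
    apply chiFn_pair
    · rw [abs_mul, abs_mul]
      apply mul_le_mul_of_nonneg_left _ (abs_nonneg _)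
      rw [abs_of_nonneg (by linarith), abs_of_nonneg (by linarith)]
      linarith
    · rw [abs_mul]
      have hb : |θ - 1/2| ≤ 1/2 := by
        rw [abs_le]; constructor <;> linarith
      have : |θ - 1/2| * |s - r| ≤ (1/2) * (s-r) := by
        apply mul_le_mul hb (le_of_eq (abs_of_nonneg (by linarith))) (abs_nonneg _) (by norm_num)
      rw [hm]; linarith
  rw [intervalIntegral.integral_add i1 i2, intervalIntegral.integral_add i3 i4] at key
  have f1 : (∫ θ in (0:ℝ)..1, chiFn (s + θ*(r-s))) = Jint r s := by
    rw [show (∫ θ in (0:ℝ)..1, chiFn (s + θ*(r-s))) = Jint s r from rfl, ← Jint_flip]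
  have f2 : (∫ θ in (0:ℝ)..1, chiFn (s' + θ*(r'-s'))) = Jint r' s' := by
    rw [show (∫ θ in (0:ℝ)..1, chiFn (s' + θ*(r'-s'))) = Jint s' r' from rfl, ← Jint_flip]
  rw [f1, f2] at key
  have g1 : (∫ θ in (0:ℝ)..1, chiFn (r + θ*(s-r))) = Jint r s := rfl
  have g2 : (∫ θ in (0:ℝ)..1, chiFn (r' + θ*(s'-r'))) = Jint r' s' := rfl
  rw [g1, g2] at key
  linarith

lemma psiFn_two_mul {u : ℝ} (hu : 0 < u) :
    psiFn (2*u) = psiFn u + Real.log (Real.cosh u) := by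
  have hs : 0 < Real.sinh u := Real.sinh_pos_iff.2 hu
  have hc : 0 < Real.cosh u := Real.cosh_pos u
  rw [psiFn, psiFn, Real.sinh_two_mul]
  rw [Real.log_mul (by positivity) hc.ne', Real.log_mul (by norm_num) hs.ne',
    Real.log_mul (by norm_num) hu.ne']
  ring

lemma exp_rpow' (c b : ℝ) : (Real.exp c) ^ b = Real.exp (c * b) := by
  rw [Real.rpow_def_of_pos (Real.exp_pos c), Real.log_exp]

lemma powerMean_formula {c a p : ℝ} (ha : 0 < a) (hp : 0 < p) :
    powerMean p (Real.exp (c+a)) (Real.exp (c-a))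
      = Real.exp (c + a * Jint (a*p) (2*(a*p))) := by
  have hap : 0 < a*p := by positivity
  have hc : 0 < Real.cosh (a*p) := Real.cosh_pos _
  have h1 : (Real.exp (c+a)) ^ p + (Real.exp (c-a)) ^ p
      = Real.exp (c*p) * (2 * Real.cosh (a*p)) := by
    rw [exp_rpow', exp_rpow', Real.cosh_eq]
    rw [show Real.exp (c*p) * (2 * ((Real.exp (a*p) + Real.exp (-(a*p)))/2))
      = Real.exp (c*p) * Real.exp (a*p) + Real.exp (c*p) * Real.exp (-(a*p)) from by ring,
      ← Real.exp_add, ← Real.exp_add]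
    ring_nf
  have h2 : psiFn (2*(a*p)) - psiFn (a*p) = (2*(a*p) - a*p) * Jint (a*p) (2*(a*p)) :=
    Jint_rep hap.le (by linarith)
  have h3 : a * Jint (a*p) (2*(a*p)) = Real.log (Real.cosh (a*p)) / p := by
    rw [psiFn_two_mul hap] at h2
    have hL : Real.log (Real.cosh (a*p)) = (a*p) * Jint (a*p) (2*(a*p)) := by linarith
    rw [hL, eq_div_iff hp.ne']
    ring
  rw [powerMean, h1, h3]
  have h4 : Real.exp (c*p) * (2 * Real.cosh (a*p)) / 2 = Real.exp (c*p) * Real.cosh (a*p) := by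
    ring
  rw [h4, Real.rpow_def_of_pos (by positivity), Real.log_mul (Real.exp_pos _).ne' hc.ne',
    Real.log_exp]
  congr 1
  field_simp

lemma stolarsky_formula {c a q : ℝ} (ha : 0 < a) (hq0 : 0 ≤ q) (hq1 : q < 1) :
    stolarskyMean q (Real.exp (c+a)) (Real.exp (c-a))
      = Real.exp (c + a * Jint (a*q) a) := by
  have hs : 0 < Real.sinh a := Real.sinh_pos_iff.2 ha
  have hxy : Real.exp (c+a) ≠ Real.exp (c-a) := by
    intro h
    have := Real.exp_injective h
    linarith
  have hsub : Real.exp (c+a) - Real.exp (c-a) = Real.exp c * (2 * Real.sinh a) := by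
    rw [Real.sinh_eq]
    rw [show Real.exp c * (2 * ((Real.exp a - Real.exp (-a))/2))
      = Real.exp c * Real.exp a - Real.exp c * Real.exp (-a) from by ring,
      ← Real.exp_add, ← Real.exp_add]
    ring_nf
  rcases eq_or_lt_of_le hq0 with hq | hq
  · -- q = 0 : logarithmic mean
    rw [stolarskyMean, if_neg hxy, if_pos hq.symm, ← hq]
    have hlog : Real.log (Real.exp (c+a)) - Real.log (Real.exp (c-a)) = 2*a := by
      rw [Real.log_exp, Real.log_exp]; ring
    rw [hsub, hlog]
    have hrep : psiFn a - psiFn 0 = (a - 0) * Jint 0 a := Jint_rep le_rfl ha.le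
    rw [psiFn_zero] at hrep
    have hJ : a * Jint (a*0) a = psiFn a := by
      rw [mul_zero]
      linarith [hrep]
    rw [hJ, psiFn, Real.exp_add, Real.exp_sub, Real.exp_log hs, Real.exp_log ha]
    field_simp
  · -- 0 < q < 1
    have haq : 0 < a*q := by positivity
    have hsq : 0 < Real.sinh (a*q) := Real.sinh_pos_iff.2 haq
    rw [stolarskyMean, if_neg hxy, if_neg hq.ne']
    have hnum : (Real.exp (c+a)) ^ q - (Real.exp (c-a)) ^ q
        = Real.exp (c*q) * (2 * Real.sinh (a*q)) := by
      rw [exp_rpow', exp_rpow', Real.sinh_eq]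
      rw [show Real.exp (c*q) * (2 * ((Real.exp (a*q) - Real.exp (-(a*q)))/2))
        = Real.exp (c*q) * Real.exp (a*q) - Real.exp (c*q) * Real.exp (-(a*q)) from by ring,
        ← Real.exp_add, ← Real.exp_add]
      ring_nf
    have hRpos : 0 < Real.exp ((q-1)*c) * (Real.sinh (a*q) / (q * Real.sinh a)) := by
      positivity
    have hR : ((Real.exp (c+a)) ^ q - (Real.exp (c-a)) ^ q)
        / (q * (Real.exp (c+a) - Real.exp (c-a)))
        = Real.exp ((q-1)*c) * (Real.sinh (a*q) / (q * Real.sinh a)) := by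
      rw [hnum, hsub]
      rw [show Real.exp ((q-1)*c) = Real.exp (c*q) / Real.exp c from by
        rw [← Real.exp_sub]; congr 1; ring]
      field_simp
    rw [hR, Real.rpow_def_of_pos hRpos]
    have hlogR : Real.log (Real.exp ((q-1)*c) * (Real.sinh (a*q) / (q * Real.sinh a)))
        = (q-1)*c + (Real.log (Real.sinh (a*q)) - Real.log q - Real.log (Real.sinh a)) := by
      rw [Real.log_mul (Real.exp_pos _).ne' (by positivity), Real.log_exp,
        Real.log_div hsq.ne' (by positivity), Real.log_mul hq.ne' hs.ne']
      ring
    have hpsiq : psiFn (a*q) = Real.log (Real.sinh (a*q)) - Real.log a - Real.log q := by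
      rw [psiFn, Real.log_mul ha.ne' hq.ne']; ring
    have hpsia : psiFn a = Real.log (Real.sinh a) - Real.log a := rfl
    have hrep : psiFn a - psiFn (a*q) = (a - a*q) * Jint (a*q) a :=
      Jint_rep haq.le (by nlinarith)
    have hkey : Real.log (Real.exp ((q-1)*c) * (Real.sinh (a*q) / (q * Real.sinh a)))
        = (q-1) * (c + a * Jint (a*q) a) := by
      rw [hlogR]
      have e1 : Real.log (Real.sinh (a*q)) - Real.log q - Real.log (Real.sinh a)
          = psiFn (a*q) - psiFn a := by rw [hpsiq, hpsia]; ring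
      rw [e1]
      nlinarith [hrep]
    rw [hkey]
    congr 1
    rw [mul_one_div, mul_div_cancel_left₀ _ (sub_ne_zero.2 hq1.ne)]

lemma powerMean_symm (p x y : ℝ) : powerMean p x y = powerMean p y x := by
  rw [powerMean, powerMean, add_comm]

lemma stolarsky_symm (q x y : ℝ) : stolarskyMean q x y = stolarskyMean q y x := by
  unfold stolarskyMean
  by_cases h : x = y
  · rw [if_pos h, if_pos h.symm, h]
  · rw [if_neg h, if_neg (Ne.symm h)]
    by_cases hq : q = 0
    · rw [if_pos hq, if_pos hq]
      rw [show x - y = -(y-x) from by ring,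
        show Real.log x - Real.log y = -(Real.log y - Real.log x) from by ring, neg_div_neg_eq]
    · rw [if_neg hq, if_neg hq]
      congr 1
      rw [show x^q - y^q = -(y^q - x^q) from by ring,
        show q*(x-y) = -(q*(y-x)) from by ring, neg_div_neg_eq]

lemma powerMean_diag {p x : ℝ} (hx : 0 < x) (hp : p ≠ 0) : powerMean p x x = x := by
  rw [powerMean]
  have h1 : (x^p + x^p)/2 = x^p := by ring
  rw [h1, ← Real.rpow_mul hx.le, mul_one_div_cancel hp, Real.rpow_one]

/-- For `0 ≤ q < 1` and `p ≥ max{q, (1+q)/3}`, `A_p(x,y) ≥ St_q(x,y)`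
for all `x, y > 0`. -/
theorem stmt_12 (p q : ℝ) (hq0 : 0 ≤ q) (hq1 : q < 1)
    (hp : max q ((1 + q) / 3) ≤ p) :
    ∀ x y : ℝ, 0 < x → 0 < y → stolarskyMean q x y ≤ powerMean p x y := by
  have hpq : q ≤ p := le_trans (le_max_left _ _) hp
  have hp3 : (1+q)/3 ≤ p := le_trans (le_max_right _ _) hp
  have hppos : 0 < p := by linarith
  have key : ∀ x y : ℝ, 0 < y → y < x → stolarskyMean q x y ≤ powerMean p x y := by
    intro x y hy hxy
    have hx : 0 < x := lt_trans hy hxy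
    set c := (Real.log x + Real.log y)/2 with hc
    set a := (Real.log x - Real.log y)/2 with hadef
    have hlog := Real.log_lt_log hy hxy
    have ha : 0 < a := by rw [hadef]; linarith
    have hx' : x = Real.exp (c+a) := by
      rw [show c+a = Real.log x from by rw [hc, hadef]; ring, Real.exp_log hx]
    have hy' : y = Real.exp (c-a) := by
      rw [show c-a = Real.log y from by rw [hc, hadef]; ring, Real.exp_log hy]
    rw [hx', hy', stolarsky_formula ha hq0 hq1, powerMean_formula ha hppos]
    apply Real.exp_le_exp.2
    have chain1 : Jint (a*q) a ≤ Jint (a*q) (a*(3*p-q)) := by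
      apply Jint_mono_right (by positivity) (by nlinarith) (by nlinarith)
    have chain2 : Jint (a*q) (a*(3*p-q)) ≤ Jint (a*p) (2*(a*p)) := by
      apply Jint_shrink (by positivity) (by nlinarith) (by nlinarith) (by nlinarith) (by ring)
    nlinarith [chain1, chain2, ha]
  intro x y hx hy
  rcases lt_trichotomy x y with h | h | h
  · rw [stolarsky_symm, powerMean_symm]
    exact key y x hx h
  · rw [h, stolarskyMean, if_pos rfl, powerMean_diag hy hppos.ne']
  · exact key x y hy h
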